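/- Let k be a field with char(k) ≠ 2 and n ∈ {3,4,5}. Let V₆ be a 6-dimensional k-vector space, V₅ ⊂ V₆ a 5-dimensional subspace, W ⊆ ⋀²V₅ a subspace with dim W = n+5, ε : ⋀⁵V₅ → k a linear isomorphism, and q : V₆ → {bilinear forms on W} a linear map such that each q(v) is symmetric and q(v)(w, w′) = ε(v∧w∧w′) for all v ∈ V₅ and w, w′ ∈ W. For v₀ ∈ V₆ ∖ V₅ define A(v₀) := {ξ + v₀∧w : ξ ∈ ⋀³V₅, w ∈ W, and ε(ξ∧w″) + q(v₀)(w, w″) = 0 for all w″ ∈ W} ⊆ ⋀³V₆. Then A(v₀) is independent of the choice of v₀: for all v₀, v₀′ ∈ V₆ ∖ V₅ one has A(v₀) = A(v₀′). -/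
import Mathlib


noncomputable section

/-- For a subspace `U` of `V`, the subspace `⋀ⁿU` of the exterior algebra of `V` spanned by
`n`-fold wedge products of elements of `U`.  Taking `U = ⊤` gives `⋀ⁿV`. -/
def wedgePow {k V : Type*} [Field k] [AddCommGroup V] [Module k V]
    (U : Submodule k V) (n : ℕ) : Submodule k (ExteriorAlgebra k V) :=
  (Submodule.map (ExteriorAlgebra.ι k) U) ^ n

lemma gm_aux_subset
    {k V₆ : Type*} [Field k] [AddCommGroup V₆] [Module k V₆]
    (V₅ : Submodule k V₆)
    (W : Submodule k (ExteriorAlgebra k V₆)) (hW2 : W ≤ wedgePow V₅ 2)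
    (ε : ExteriorAlgebra k V₆ →ₗ[k] k)
    (q : V₆ →ₗ[k] W →ₗ[k] W →ₗ[k] k)
    (hqcomp : ∀ v ∈ V₅, ∀ w w' : W,
      q v w w' = ε (ExteriorAlgebra.ι k v * (w : ExteriorAlgebra k V₆) *
        (w' : ExteriorAlgebra k V₆)))
    (v₀ v₀' : V₆) (hv₀' : v₀' ∉ V₅)
    (hrepr : ∃ c : k, ∃ u ∈ V₅, v₀' = c • v₀ + u) :
    {x : ExteriorAlgebra k V₆ | ∃ ξ ∈ wedgePow V₅ 3, ∃ w : W,
        x = ξ + ExteriorAlgebra.ι k v₀ * (w : ExteriorAlgebra k V₆) ∧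
        ∀ w'' : W, ε (ξ * (w'' : ExteriorAlgebra k V₆)) + q v₀ w w'' = 0} ⊆
    {x : ExteriorAlgebra k V₆ | ∃ ξ ∈ wedgePow V₅ 3, ∃ w : W,
        x = ξ + ExteriorAlgebra.ι k v₀' * (w : ExteriorAlgebra k V₆) ∧
        ∀ w'' : W, ε (ξ * (w'' : ExteriorAlgebra k V₆)) + q v₀' w w'' = 0} := by
  obtain ⟨c, u, hu, hv⟩ := hrepr
  have hc : c ≠ 0 := by
    rintro rfl
    apply hv₀'
    rw [zero_smul, zero_add] at hv
    exact hv ▸ hu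
  rintro x ⟨ξ, hξ, w, rfl, hcond⟩
  refine ⟨ξ - c⁻¹ • (ExteriorAlgebra.ι k u * (w : ExteriorAlgebra k V₆)), ?_, c⁻¹ • w, ?_, ?_⟩
  · apply sub_mem hξ
    apply Submodule.smul_mem
    have h3 : wedgePow V₅ 3 = (Submodule.map (ExteriorAlgebra.ι k) V₅) *
        (Submodule.map (ExteriorAlgebra.ι k) V₅) ^ 2 := by
      rw [wedgePow, pow_succ']
    rw [h3]
    exact Submodule.mul_mem_mul (Submodule.mem_map_of_mem hu) (hW2 w.2)
  · have hι : ExteriorAlgebra.ι k v₀' = c • ExteriorAlgebra.ι k v₀ + ExteriorAlgebra.ι k u := by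
      rw [hv, map_add, map_smul]
    rw [Submodule.coe_smul, hι, add_mul, smul_mul_assoc, mul_smul_comm, mul_smul_comm,
      smul_smul, mul_inv_cancel₀ hc, one_smul]
    abel
  · intro w''
    have hq' : q v₀' (c⁻¹ • w) w'' = c⁻¹ * (c * q v₀ w w'' +
        ε (ExteriorAlgebra.ι k u * (w : ExteriorAlgebra k V₆) * (w'' : ExteriorAlgebra k V₆))) := by
      rw [← hqcomp u hu w w'']
      simp only [hv, map_add, map_smul, LinearMap.add_apply, LinearMap.smul_apply,
        smul_eq_mul]
    rw [hq', sub_mul, map_sub, smul_mul_assoc, map_smul]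
    have h := hcond w''
    simp only [smul_eq_mul]
    field_simp
    linear_combination c * h


lemma gm_aux_repr
    {k V₆ : Type*} [Field k] [AddCommGroup V₆] [Module k V₆]
    (hdim6 : Module.finrank k V₆ = 6)
    (V₅ : Submodule k V₆) (hdim5 : Module.finrank k V₅ = 5)
    (v v' : V₆) (hv : v ∉ V₅) :
    ∃ c : k, ∃ u ∈ V₅, v' = c • v + u := by
  have hfin : Module.Finite k V₆ := Module.finite_of_finrank_pos (by rw [hdim6]; norm_num)
  have hvne : v ≠ 0 := fun h => hv (h ▸ V₅.zero_mem)
  have hdisj : Disjoint V₅ (Submodule.span k {v}) :=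
    (Submodule.disjoint_span_singleton).2 (fun h => absurd h hv)
  have hsup : V₅ ⊔ Submodule.span k {v} = ⊤ := by
    apply Submodule.eq_top_of_finrank_eq
    have h1 := Submodule.finrank_sup_add_finrank_inf_eq V₅ (Submodule.span k {v})
    rw [hdisj.eq_bot] at h1
    simp only [finrank_bot, add_zero] at h1
    rw [h1, hdim5, finrank_span_singleton hvne, hdim6]
  have : v' ∈ V₅ ⊔ Submodule.span k {v} := hsup ▸ Submodule.mem_top
  obtain ⟨u, hu, z, hz, hzu⟩ := Submodule.mem_sup.1 this
  obtain ⟨c, rfl⟩ := Submodule.mem_span_singleton.1 hz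
  exact ⟨c, u, hu, by rw [← hzu]; abel⟩


/-- **Well-definedness in the GM–Lagrangian correspondence.**  Given an `n`-dimensional GM
datum `(V₆, V₅, W, q, ε)` over a field of characteristic `≠ 2`, the set
`A(v₀) = {ξ + v₀∧w : ξ ∈ ⋀³V₅, w ∈ W, ε(ξ∧w″) + q(v₀)(w,w″) = 0 ∀ w″ ∈ W}` is independent
of the choice of `v₀ ∈ V₆ ∖ V₅`. -/
theorem gm_datum_lagrangian_independent_of_v0
    {k V₆ : Type*} [Field k] [AddCommGroup V₆] [Module k V₆]
    (hchar : ringChar k ≠ 2) {n : ℕ} (hn : n = 3 ∨ n = 4 ∨ n = 5)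
    (hdim6 : Module.finrank k V₆ = 6)
    (V₅ : Submodule k V₆) (hdim5 : Module.finrank k V₅ = 5)
    (W : Submodule k (ExteriorAlgebra k V₆)) (hW2 : W ≤ wedgePow V₅ 2)
    (hWdim : Module.finrank k W = n + 5)
    (ε : ExteriorAlgebra k V₆ →ₗ[k] k)
    (hεinj : ∀ x ∈ wedgePow V₅ 5, ε x = 0 → x = 0)
    (hεsurj : ∀ c : k, ∃ x ∈ wedgePow V₅ 5, ε x = c)
    (q : V₆ →ₗ[k] W →ₗ[k] W →ₗ[k] k)
    (hqsymm : ∀ (v : V₆) (w w' : W), q v w w' = q v w' w)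
    (hqcomp : ∀ v ∈ V₅, ∀ w w' : W,
      q v w w' = ε (ExteriorAlgebra.ι k v * (w : ExteriorAlgebra k V₆) *
        (w' : ExteriorAlgebra k V₆)))
    (v₀ v₀' : V₆) (hv₀ : v₀ ∉ V₅) (hv₀' : v₀' ∉ V₅) :
    {x : ExteriorAlgebra k V₆ | ∃ ξ ∈ wedgePow V₅ 3, ∃ w : W,
        x = ξ + ExteriorAlgebra.ι k v₀ * (w : ExteriorAlgebra k V₆) ∧
        ∀ w'' : W, ε (ξ * (w'' : ExteriorAlgebra k V₆)) + q v₀ w w'' = 0} =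
    {x : ExteriorAlgebra k V₆ | ∃ ξ ∈ wedgePow V₅ 3, ∃ w : W,
        x = ξ + ExteriorAlgebra.ι k v₀' * (w : ExteriorAlgebra k V₆) ∧
        ∀ w'' : W, ε (ξ * (w'' : ExteriorAlgebra k V₆)) + q v₀' w w'' = 0} :=
  Set.Subset.antisymm
    (gm_aux_subset V₅ W hW2 ε q hqcomp v₀ v₀' hv₀'
      (gm_aux_repr hdim6 V₅ hdim5 v₀ v₀' hv₀))
    (gm_aux_subset V₅ W hW2 ε q hqcomp v₀' v₀ hv₀
      (gm_aux_repr hdim6 V₅ hdim5 v₀' v₀ hv₀'))
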